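/- arXiv:1812.01502 — 2 statements merged into one kernel-verified Lean document; each statement's English description precedes it below -/
import Mathlib

section
/- For m = 2^S and N = mM, the ordered product A_S · A_{S-1} ⋯ A_1 of the matrices A_s := I_{2^{S-s}} ⊗ (1/2)J_2 ⊗ I_{2^{s-1}} ⊗ (1/M)J_M equals (1/N)·J_N, the N×N matrix with all entries equal to 1/N. -/
open Matrix Kronecker

/-- The k×k all-ones matrix. -/
noncomputable def J (k : ℕ) : Matrix (Fin k) (Fin k) ℝ := Matrix.of fun _ _ => 1

/-- The matrix `A_s := I_{2^{S-s}} ⊗ (1/2)J_2 ⊗ I_{2^{s-1}} ⊗ (1/M)J_M`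
on the product index type. -/
noncomputable def Akron (S M s : ℕ) :
    Matrix (((Fin (2^(S-s)) × Fin 2) × Fin (2^(s-1))) × Fin M)
           (((Fin (2^(S-s)) × Fin 2) × Fin (2^(s-1))) × Fin M) ℝ :=
  (((1 : Matrix (Fin (2^(S-s))) (Fin (2^(S-s))) ℝ) ⊗ₖ ((1/2 : ℝ) • J 2)) ⊗ₖ
      (1 : Matrix (Fin (2^(s-1))) (Fin (2^(s-1))) ℝ)) ⊗ₖ ((1/(M:ℝ)) • J M)

/-- Flattening equivalence for a triple Kronecker product (row-major order). -/
def bEquiv (a b c : ℕ) : (Fin a × Fin b) × Fin c ≃ Fin (a * b * c) :=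
  (finProdFinEquiv.prodCongr (Equiv.refl (Fin c))).trans finProdFinEquiv

/-- Flattening equivalence for a fourfold Kronecker product (row-major order). -/
def aEquiv (a b c d : ℕ) : ((Fin a × Fin b) × Fin c) × Fin d ≃ Fin (a * b * c * d) :=
  ((bEquiv a b c).prodCongr (Equiv.refl (Fin d))).trans finProdFinEquiv

lemma size_eq (S s M : ℕ) (h1 : 1 ≤ s) (h2 : s ≤ S) :
    2^(S-s) * 2 * 2^(s-1) * M = 2^S * M := by
  have hS : S - s + (s - 1) + 1 = S := by omega
  calc 2^(S-s) * 2 * 2^(s-1) * M = (2^(S-s) * 2^(s-1) * 2^1) * M := by ring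
    _ = 2^(S - s + (s-1) + 1) * M := by rw [pow_add, pow_add]
    _ = 2^S * M := by rw [hS]

/-- The matrix `A_s` viewed as an `N × N` matrix, `N = 2^S·M`, with the rows and
columns ordered consistently with the Kronecker (row-major) structure. -/
noncomputable def Amat (S M s : ℕ) : Matrix (Fin (2^S * M)) (Fin (2^S * M)) ℝ :=
  if h : 1 ≤ s ∧ s ≤ S then
    Matrix.reindex
      ((aEquiv (2^(S-s)) 2 (2^(s-1)) M).trans (finCongr (size_eq S s M h.1 h.2)))
      ((aEquiv (2^(S-s)) 2 (2^(s-1)) M).trans (finCongr (size_eq S s M h.1 h.2)))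
      (Akron S M s)
  else 0

lemma size_eqB (S s : ℕ) (h1 : 1 ≤ s) (h2 : s ≤ S) :
    2^(S-s) * 2 * 2^(s-1) = 2^S := by
  have := size_eq S s 1 h1 h2
  simpa using this

/-- The matrix `B_s := I_{2^{S-s}} ⊗ (1/2)J_2 ⊗ I_{2^{s-1}}` viewed as an
`m × m` matrix, `m = 2^S`. -/
noncomputable def Bmat (S s : ℕ) : Matrix (Fin (2^S)) (Fin (2^S)) ℝ :=
  if h : 1 ≤ s ∧ s ≤ S then
    Matrix.reindex
      ((bEquiv (2^(S-s)) 2 (2^(s-1))).trans (finCongr (size_eqB S s h.1 h.2)))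
      ((bEquiv (2^(S-s)) 2 (2^(s-1))).trans (finCongr (size_eqB S s h.1 h.2)))
      (((1 : Matrix (Fin (2^(S-s))) (Fin (2^(S-s))) ℝ) ⊗ₖ ((1/2 : ℝ) • J 2)) ⊗ₖ
        (1 : Matrix (Fin (2^(s-1))) (Fin (2^(s-1))) ℝ))
  else 0

lemma size_eqC (S k M : ℕ) (h : k ≤ S) : 2^(S-k) * 2^k * M = 2^S * M := by
  have hS : S - k + k = S := by omega
  rw [← pow_add, hS]

/-- The matrix `I_{2^{S-k}} ⊗ (1/2^k)J_{2^k} ⊗ (1/M)J_M` viewed as an `N × N`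
matrix, `N = 2^S·M`. -/
noncomputable def Cmat (S M k : ℕ) : Matrix (Fin (2^S * M)) (Fin (2^S * M)) ℝ :=
  if h : k ≤ S then
    Matrix.reindex
      ((bEquiv (2^(S-k)) (2^k) M).trans (finCongr (size_eqC S k M h)))
      ((bEquiv (2^(S-k)) (2^k) M).trans (finCongr (size_eqC S k M h)))
      (((1 : Matrix (Fin (2^(S-k))) (Fin (2^(S-k))) ℝ) ⊗ₖ ((1/(2^k : ℝ)) • J (2^k))) ⊗ₖ
        ((1/(M:ℝ)) • J M))
  else 0

lemma J_apply (k : ℕ) (i j : Fin k) : _root_.J k i j = 1 := rfl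

lemma JM_mul_JM (M : ℕ) (hM : 0 < M) :
    ((1/(M:ℝ)) • _root_.J M) * ((1/(M:ℝ)) • _root_.J M) = (1/(M:ℝ)) • _root_.J M := by
  ext i j
  have : (M:ℝ) ≠ 0 := Nat.cast_ne_zero.mpr hM.ne'
  simp [J_apply, Matrix.mul_apply, Finset.sum_const]
  field_simp

lemma one_eq_J0 : (1 : Matrix (Fin (2^0)) (Fin (2^0)) ℝ) = (1/((2:ℝ)^0)) • _root_.J (2^0) := by
  ext i j
  have : i = j := by apply Fin.ext; omega
  subst this
  simp [J_apply]

lemma Jsplit (k : ℕ) : ((1/((2:ℝ)^(k+1))) • _root_.J (2^(k+1))) =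
    Matrix.reindex (finProdFinEquiv.trans (finCongr (by rw [pow_succ, mul_comm] : 2 * 2^k = 2^(k+1))))
      (finProdFinEquiv.trans (finCongr (by rw [pow_succ, mul_comm] : 2 * 2^k = 2^(k+1))))
      (((1/(2:ℝ)) • _root_.J 2) ⊗ₖ ((1/((2:ℝ)^k)) • _root_.J (2^k))) := by
  ext i j
  simp [J_apply, Matrix.reindex_apply, Matrix.submatrix_apply, Matrix.kroneckerMap_apply]
  ring

lemma Amat_succ (S M k : ℕ) (hk : k + 1 ≤ S)
    (hEa : 2^(S-(k+1)) * 2 * 2^k * M = 2^S * M) :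
    Amat S M (k+1) = Matrix.reindex
      ((aEquiv (2^(S-(k+1))) 2 (2^k) M).trans (finCongr hEa))
      ((aEquiv (2^(S-(k+1))) 2 (2^k) M).trans (finCongr hEa))
      ((((1 : Matrix (Fin (2^(S-(k+1)))) (Fin (2^(S-(k+1)))) ℝ) ⊗ₖ ((1/2 : ℝ) • _root_.J 2)) ⊗ₖ
        (1 : Matrix (Fin (2^k)) (Fin (2^k)) ℝ)) ⊗ₖ ((1/(M:ℝ)) • _root_.J M)) := by
  rw [Amat, dif_pos (⟨Nat.le_add_left 1 k, hk⟩ : 1 ≤ k+1 ∧ k+1 ≤ S)]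
  rfl

lemma Cmat_split (S M k : ℕ) (hk : k + 1 ≤ S)
    (hEa : 2^(S-(k+1)) * 2 * 2^k * M = 2^S * M) :
    Cmat S M k = Matrix.reindex
      ((aEquiv (2^(S-(k+1))) 2 (2^k) M).trans (finCongr hEa))
      ((aEquiv (2^(S-(k+1))) 2 (2^k) M).trans (finCongr hEa))
      ((((1 : Matrix (Fin (2^(S-(k+1)))) (Fin (2^(S-(k+1)))) ℝ) ⊗ₖ
          (1 : Matrix (Fin 2) (Fin 2) ℝ)) ⊗ₖ
        ((1/((2:ℝ)^k)) • _root_.J (2^k))) ⊗ₖ ((1/(M:ℝ)) • _root_.J M)) := by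
  have hg : 2^(S-(k+1)) * 2 = 2^(S-k) := by
    rw [← pow_succ]; congr 1; omega
  have hkS : k ≤ S := Nat.le_of_succ_le hk
  rw [Cmat, dif_pos hkS]
  have h1 : (1 : Matrix (Fin (2^(S-k))) (Fin (2^(S-k))) ℝ) =
      Matrix.reindex (finProdFinEquiv.trans (finCongr hg)) (finProdFinEquiv.trans (finCongr hg))
        ((1 : Matrix (Fin (2^(S-(k+1)))) (Fin (2^(S-(k+1)))) ℝ) ⊗ₖ (1 : Matrix (Fin 2) (Fin 2) ℝ)) := by
    rw [Matrix.one_kronecker_one, Matrix.reindex_apply, Matrix.submatrix_one_equiv]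
  rw [h1, Matrix.kroneckerMap_reindex_left, Matrix.kroneckerMap_reindex_left]
  rw [Matrix.reindex_apply, Matrix.reindex_apply, Matrix.submatrix_submatrix]
  rw [Matrix.reindex_apply]
  congr 1

lemma Cmat_merge (S M k : ℕ) (hk : k + 1 ≤ S)
    (hEa : 2^(S-(k+1)) * 2 * 2^k * M = 2^S * M) :
    Cmat S M (k+1) = Matrix.reindex
      ((aEquiv (2^(S-(k+1))) 2 (2^k) M).trans (finCongr hEa))
      ((aEquiv (2^(S-(k+1))) 2 (2^k) M).trans (finCongr hEa))
      ((((1 : Matrix (Fin (2^(S-(k+1)))) (Fin (2^(S-(k+1)))) ℝ) ⊗ₖ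
          ((1/2 : ℝ) • _root_.J 2)) ⊗ₖ
        ((1/((2:ℝ)^k)) • _root_.J (2^k))) ⊗ₖ ((1/(M:ℝ)) • _root_.J M)) := by
  rw [Cmat, dif_pos hk, Jsplit k]
  rw [Matrix.kroneckerMap_reindex_right, Matrix.kroneckerMap_reindex_left]
  rw [Matrix.reindex_apply, Matrix.reindex_apply, Matrix.submatrix_submatrix]
  have hassoc := Matrix.kronecker_assoc
    (1 : Matrix (Fin (2^(S-(k+1)))) (Fin (2^(S-(k+1)))) ℝ)
    ((1/2 : ℝ) • _root_.J 2) ((1/((2:ℝ)^k)) • _root_.J (2^k))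
  rw [Matrix.reindex_apply] at hassoc
  rw [← hassoc]
  rw [← Matrix.reindex_apply]
  rw [Matrix.kroneckerMap_reindex_left]
  rw [Matrix.reindex_apply, Matrix.submatrix_submatrix]
  rw [Matrix.reindex_apply]
  have hF : (((Equiv.prodAssoc (Fin (2 ^ (S - (k + 1)))) (Fin 2) (Fin (2 ^ k))).prodCongr
        (Equiv.refl (Fin M)))).trans
      (((((Equiv.refl (Fin (2 ^ (S - (k + 1))))).prodCongr
          (finProdFinEquiv.trans (finCongr (by rw [pow_succ, mul_comm] : 2 * 2^k = 2^(k+1))))).prodCongr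
          (Equiv.refl (Fin M)))).trans
        ((bEquiv (2 ^ (S - (k + 1))) (2 ^ (k + 1)) M).trans (finCongr (size_eqC S (k+1) M hk)))) =
      (aEquiv (2 ^ (S - (k + 1))) 2 (2 ^ k) M).trans (finCongr hEa) := by
    apply Equiv.ext
    rintro ⟨⟨⟨p,b⟩,r⟩,d⟩
    apply Fin.ext
    simp [aEquiv, bEquiv, finProdFinEquiv, Equiv.prodAssoc]
    left
    ring
  rw [← hF]
  rfl

lemma step (S M k : ℕ) (hM : 0 < M) (hk : k + 1 ≤ S) :
    Amat S M (k+1) * Cmat S M k = Cmat S M (k+1) := by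
  have hEa : 2^(S-(k+1)) * 2 * 2^k * M = 2^S * M := by
    have h : S - (k+1) + k + 1 = S := by omega
    calc 2^(S-(k+1)) * 2 * 2^k * M = 2^(S-(k+1)+k+1) * M := by
          rw [pow_succ, pow_add]; ring
      _ = 2^S * M := by rw [h]
  rw [Amat_succ S M k hk hEa, Cmat_split S M k hk hEa, Cmat_merge S M k hk hEa]
  rw [Matrix.reindex_apply, Matrix.reindex_apply, Matrix.reindex_apply,
    Matrix.submatrix_mul_equiv]
  rw [← Matrix.mul_kronecker_mul, ← Matrix.mul_kronecker_mul, ← Matrix.mul_kronecker_mul,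
    JM_mul_JM M hM]
  simp

lemma base (S M : ℕ) (hS : 1 ≤ S) : Amat S M 1 = Cmat S M 1 := by
  have hEa : 2^(S-(0+1)) * 2 * 2^0 * M = 2^S * M := by
    have h : S - 1 + 1 = S := by omega
    calc 2^(S-(0+1)) * 2 * 2^0 * M = 2^(S-1+1) * M := by rw [pow_succ]; ring
      _ = 2^S * M := by rw [h]
  have h1 := Amat_succ S M 0 hS hEa
  have h2 := Cmat_merge S M 0 hS hEa
  rw [one_eq_J0] at h1
  exact h1.trans h2.symm

lemma Cmat_final (S M : ℕ) (hM : 0 < M) : Cmat S M S =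
    Matrix.of (fun (_ _ : Fin (2^S * M)) => 1 / ((2^S * M : ℕ) : ℝ)) := by
  rw [Cmat, dif_pos le_rfl]
  ext i j
  rw [Matrix.reindex_apply, Matrix.submatrix_apply]
  simp only [Matrix.kroneckerMap_apply, Matrix.smul_apply, J_apply, Matrix.of_apply,
    smul_eq_mul, mul_one]
  have h1 : ∀ x y : Fin (2 ^ (S - S)), (1 : Matrix (Fin (2^(S-S))) (Fin (2^(S-S))) ℝ) x y = 1 := by
    intro x y
    have hx : (x:ℕ) < 1 := by simpa [Nat.sub_self] using x.isLt
    have hy : (y:ℕ) < 1 := by simpa [Nat.sub_self] using y.isLt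
    have : x = y := by apply Fin.ext; omega
    rw [this, Matrix.one_apply_eq]
  rw [h1]
  push_cast
  field_simp

lemma prodC (S M : ℕ) (hM : 0 < M) : ∀ k, 1 ≤ k → k ≤ S →
    (List.ofFn fun t : Fin k => Amat S M (k - (t:ℕ))).prod = Cmat S M k := by
  intro k
  induction k with
  | zero => omega
  | succ n ih =>
    intro _ hkS
    rw [List.ofFn_succ, List.prod_cons]
    have hfun : (fun i : Fin n => Amat S M (n + 1 - ((i.succ : Fin (n+1)):ℕ))) =
        fun i : Fin n => Amat S M (n - (i:ℕ)) := by
      funext i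
      simp [Fin.val_succ]
    by_cases hn : n = 0
    · subst hn
      simp only [List.ofFn_zero, List.prod_nil, mul_one, Fin.val_zero, Nat.sub_zero]
      exact base S M hkS
    · have h1n : 1 ≤ n := Nat.one_le_iff_ne_zero.mpr hn
      rw [hfun, ih h1n (by omega)]
      simpa using step S M n hM hkS


/-- the ordered product `A_S · A_{S-1} ⋯ A_1` equals the `N × N`
matrix all of whose entries are `1/N`, where `N = 2^S·M`. -/
theorem stmt5 (S M : ℕ) (hS : 0 < S) (hM : 0 < M) :
    (List.ofFn (fun t : Fin S => Amat S M (S - (t : ℕ)))).prod =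
      Matrix.of (fun (_ _ : Fin (2^S * M)) => 1 / ((2^S * M : ℕ) : ℝ)) := by
  rw [prodC S M hM S hS le_rfl, Cmat_final S M hM]
end

section
/- (Conditional unbiasedness of the mutation step / L^r bound.) Let ζ̂^1,...,ζ̂^N be X-valued random variables and, conditionally on them, let ζ^1,...,ζ^N be independent with ζ^i ~ f(ζ̂^i, ·) for a Markov kernel f. Then for any bounded measurable φ with ‖φ‖ ≤ 1 and any r ≥ 1, E[ | (1/N)Σ_i φ(ζ^i) − (1/N)Σ_i f(φ)(ζ̂^i) |^r ]^{1/r} ≤ 2 B_r / √N, where f(φ)(x) := ∫ φ(y) f(x, dy) and B_r is the BDG constant. -/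
open MeasureTheory ProbabilityTheory

open scoped ENNReal NNReal



section helpers

variable {α : Type*} {mα : MeasurableSpace α} {ν : Measure α} [IsFiniteMeasure ν]

lemma integrable_of_bdd17 {g : α → ℝ} (hg : Measurable g) {C : ℝ} (hC : ∀ ω, |g ω| ≤ C) :
    Integrable g ν :=
  (integrable_const C).mono' hg.aestronglyMeasurable
    (Filter.Eventually.of_forall fun ω => by simpa [Real.norm_eq_abs] using hC ω)

lemma abs_prod_le17 {N : ℕ} (u C : Fin N → ℝ) (h : ∀ i, |u i| ≤ C i) :
    |∏ i, u i| ≤ ∏ i, C i := by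
  rw [Finset.abs_prod]
  exact Finset.prod_le_prod (fun i _ => abs_nonneg _) fun i _ => h i

lemma integrable_prod_bdd17 {N : ℕ} {u : Fin N → α → ℝ} (hm : ∀ i, Measurable (u i))
    (hb : ∀ i, ∃ C, ∀ ω, |u i ω| ≤ C) : Integrable (fun ω => ∏ i, u i ω) ν := by
  choose C hC using hb
  refine integrable_of_bdd17 (Finset.measurable_prod _ fun i _ => hm i)
    (C := ∏ i, |C i|) fun ω => ?_
  exact abs_prod_le17 _ _ fun i => (hC i ω).trans (le_abs_self _)

end helpers

section setting

variable {Ω X : Type} {m0 : MeasurableSpace Ω} {mX : MeasurableSpace X}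

/-- the σ-algebra generated by the `ζhat i`. -/
def sigHat (N : ℕ) (ζhat : Fin N → Ω → X) : MeasurableSpace Ω :=
  MeasurableSpace.comap (fun ω (i : Fin N) => ζhat i ω) MeasurableSpace.pi

variable {μ : Measure Ω} [IsProbabilityMeasure μ]
  {N : ℕ} {f : Kernel X X} [IsMarkovKernel f] {ζhat ζ : Fin N → Ω → X}

lemma stepA17 (hζhat : ∀ i, Measurable (ζhat i)) (hζ : ∀ i, Measurable (ζ i))
    (hyp : ∀ h : Fin N → X → ℝ, (∀ i, Measurable (h i)) → (∀ i, ∃ C, ∀ x, |h i x| ≤ C) →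
      μ[(fun ω => ∏ i, h i (ζ i ω)) |
          MeasurableSpace.comap (fun ω (i : Fin N) => ζhat i ω) MeasurableSpace.pi]
        =ᵐ[μ] fun ω => ∏ i, ∫ y, h i y ∂(f (ζhat i ω)))
    (h w : Fin N → X → ℝ) (hh : ∀ i, Measurable (h i)) (hhb : ∀ i, ∃ C, ∀ x, |h i x| ≤ C)
    (hw : ∀ i, Measurable (w i)) (hwb : ∀ i, ∃ C, ∀ x, |w i x| ≤ C) :
    ∫ ω, ∏ i, (h i (ζ i ω) * w i (ζhat i ω)) ∂μ
      = ∫ ω, ∏ i, ((∫ y, h i y ∂(f (ζhat i ω))) * w i (ζhat i ω)) ∂μ := by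
  have hm : sigHat N ζhat ≤ m0 := (measurable_pi_lambda _ fun i => hζhat i).comap_le
  haveI : SigmaFinite (μ.trim hm) := (isFiniteMeasure_trim hm).toSigmaFinite
  set W : Ω → ℝ := fun ω => ∏ i, w i (ζhat i ω) with hW_def
  set H : Ω → ℝ := fun ω => ∏ i, h i (ζ i ω) with hH_def
  have hjoint : Measurable[sigHat N ζhat] (fun ω (i : Fin N) => ζhat i ω) :=
    Measurable.of_comap_le le_rfl
  have hζhatm : ∀ i, Measurable[sigHat N ζhat] (ζhat i) := fun i =>
    (measurable_pi_apply i).comp hjoint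
  have hWm : Measurable[sigHat N ζhat] W :=
    Finset.measurable_prod _ fun i _ => (hw i).comp (hζhatm i)
  have hWsm : StronglyMeasurable[sigHat N ζhat] W := hWm.stronglyMeasurable
  have hW0 : Measurable W := hWm.mono hm le_rfl
  have hH0 : Measurable H := Finset.measurable_prod _ fun i _ => (hh i).comp (hζ i)
  have hHint : Integrable H μ :=
    integrable_prod_bdd17 (fun i => (hh i).comp (hζ i)) fun i => by
      obtain ⟨C, hC⟩ := hhb i; exact ⟨C, fun ω => hC _⟩
  have hWHint : Integrable (W * H) μ := by
    choose Ch hCh using hhb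
    choose Cw hCw using hwb
    refine integrable_of_bdd17 (hW0.mul hH0) (C := (∏ i, |Cw i|) * ∏ i, |Ch i|) fun ω => ?_
    rw [Pi.mul_apply, abs_mul]
    exact mul_le_mul (abs_prod_le17 _ _ fun i => (hCw i _).trans (le_abs_self _))
      (abs_prod_le17 _ _ fun i => (hCh i _).trans (le_abs_self _)) (abs_nonneg _)
      (Finset.prod_nonneg fun i _ => abs_nonneg _)
  have hcond : μ[H | sigHat N ζhat] =ᵐ[μ] fun ω => ∏ i, ∫ y, h i y ∂(f (ζhat i ω)) :=
    hyp h hh hhb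
  calc ∫ ω, ∏ i, (h i (ζ i ω) * w i (ζhat i ω)) ∂μ
      = ∫ ω, (W * H) ω ∂μ := by
        refine integral_congr_ae (Filter.Eventually.of_forall fun ω => ?_)
        simp only [Pi.mul_apply, hW_def, hH_def, Finset.prod_mul_distrib]
        ring
    _ = ∫ ω, (μ[W * H | sigHat N ζhat]) ω ∂μ := (integral_condExp (f := W * H) hm).symm
    _ = ∫ ω, W ω * (μ[H | sigHat N ζhat]) ω ∂μ :=
        integral_congr_ae (condExp_mul_of_stronglyMeasurable_left hWsm hWHint hHint)
    _ = ∫ ω, W ω * ∏ i, ∫ y, h i y ∂(f (ζhat i ω)) ∂μ := by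
        refine integral_congr_ae ?_
        filter_upwards [hcond] with ω hω
        rw [hω]
    _ = ∫ ω, ∏ i, ((∫ y, h i y ∂(f (ζhat i ω))) * w i (ζhat i ω)) ∂μ := by
        refine integral_congr_ae (Filter.Eventually.of_forall fun ω => ?_)
        simp only [Finset.prod_mul_distrib, hW_def]
        ring

end setting

section kernelfacts

variable {X : Type} {mX : MeasurableSpace X}

/-- kernel integral of `φ`. -/
noncomputable def kI (f : Kernel X X) (φ : X → ℝ) (x : X) : ℝ := ∫ y, φ y ∂(f x)

/-- centered kernel moment. -/
noncomputable def kG (f : Kernel X X) (φ : X → ℝ) (n : ℕ) (x : X) : ℝ :=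
  ∫ y, (φ y - kI f φ x) ^ n ∂(f x)

variable {f : Kernel X X} [IsMarkovKernel f] {φ : X → ℝ}

lemma kI_meas (hφ : Measurable φ) : Measurable (kI f φ) :=
  (StronglyMeasurable.integral_kernel_prod_right'
    (f := fun p : X × X => φ p.2) (hφ.comp measurable_snd).stronglyMeasurable).measurable

lemma kI_abs_le (hφb : ∀ x, |φ x| ≤ 1) (x : X) : |kI f φ x| ≤ 1 := by
  have := norm_integral_le_of_norm_le_const (μ := f x) (f := φ) (C := 1)
    (Filter.Eventually.of_forall fun y => by simpa [Real.norm_eq_abs] using hφb y)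
  simpa [Real.norm_eq_abs, measure_univ, kI] using this

lemma kG_meas (hφ : Measurable φ) (n : ℕ) : Measurable (kG f φ n) :=
  (StronglyMeasurable.integral_kernel_prod_right'
    (f := fun p : X × X => (φ p.2 - kI f φ p.1) ^ n)
    (((hφ.comp measurable_snd).sub ((kI_meas hφ).comp measurable_fst)).pow_const
      n).stronglyMeasurable).measurable

lemma kG_abs_le (hφb : ∀ x, |φ x| ≤ 1) (n : ℕ) (x : X) : |kG f φ n x| ≤ 2 ^ n := by
  have hb : ∀ y, ‖(φ y - kI f φ x) ^ n‖ ≤ 2 ^ n := by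
    intro y
    rw [Real.norm_eq_abs, abs_pow]
    refine pow_le_pow_left₀ (abs_nonneg _) ?_ n
    calc |φ y - kI f φ x| ≤ |φ y| + |kI f φ x| := abs_sub _ _
      _ ≤ 1 + 1 := add_le_add (hφb y) (kI_abs_le hφb x)
      _ = 2 := by norm_num
  have := norm_integral_le_of_norm_le_const (μ := f x)
    (f := fun y => (φ y - kI f φ x) ^ n) (C := 2 ^ n)
    (Filter.Eventually.of_forall hb)
  simpa [Real.norm_eq_abs, measure_univ, kG] using this

lemma kG_one (hφ : Measurable φ) (hφb : ∀ x, |φ x| ≤ 1) (x : X) : kG f φ 1 x = 0 := by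
  have hint : Integrable φ (f x) := integrable_of_bdd17 hφ hφb
  simp [kG, pow_one, integral_sub hint (integrable_const _), integral_const, measure_univ, kI]

end kernelfacts

section kexpand

variable {X : Type} {mX : MeasurableSpace X} {f : Kernel X X} [IsMarkovKernel f] {φ : X → ℝ}

lemma kG_expand (hφ : Measurable φ) (hφb : ∀ x, |φ x| ≤ 1) (n : ℕ) (x : X) :
    kG f φ n x = ∑ j ∈ Finset.range (n + 1),
      (∫ y, φ y ^ j ∂(f x)) * ((-1 : ℝ) ^ (j + n) * kI f φ x ^ (n - j) * (n.choose j : ℝ)) := by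
  have hpt : ∀ y : X, (φ y - kI f φ x) ^ n = ∑ j ∈ Finset.range (n + 1),
      φ y ^ j * ((-1 : ℝ) ^ (j + n) * kI f φ x ^ (n - j) * (n.choose j : ℝ)) := by
    intro y
    rw [sub_pow]
    exact Finset.sum_congr rfl fun j _ => by ring
  have hint : ∀ j, Integrable (fun y => φ y ^ j *
      ((-1 : ℝ) ^ (j + n) * kI f φ x ^ (n - j) * (n.choose j : ℝ))) (f x) := by
    intro j
    refine integrable_of_bdd17 ((hφ.pow_const j).mul_const _)
      (C := |(-1 : ℝ) ^ (j + n) * kI f φ x ^ (n - j) * (n.choose j : ℝ)|) fun y => ?_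
    rw [abs_mul]
    refine mul_le_of_le_one_left (abs_nonneg _) ?_
    rw [abs_pow]
    exact pow_le_one₀ (abs_nonneg _) (hφb y)
  calc kG f φ n x = ∫ y, ∑ j ∈ Finset.range (n + 1),
        φ y ^ j * ((-1 : ℝ) ^ (j + n) * kI f φ x ^ (n - j) * (n.choose j : ℝ)) ∂(f x) := by
        rw [kG]; exact integral_congr_ae (Filter.Eventually.of_forall fun y => hpt y)
    _ = ∑ j ∈ Finset.range (n + 1), ∫ y, φ y ^ j *
        ((-1 : ℝ) ^ (j + n) * kI f φ x ^ (n - j) * (n.choose j : ℝ)) ∂(f x) :=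
        integral_finset_sum _ fun j _ => hint j
    _ = _ := Finset.sum_congr rfl fun j _ => integral_mul_const _ _

end kexpand

section stepB

variable {Ω X : Type} {m0 : MeasurableSpace Ω} {mX : MeasurableSpace X}
  {μ : Measure Ω} [IsProbabilityMeasure μ]
  {N : ℕ} {f : Kernel X X} [IsMarkovKernel f] {ζhat ζ : Fin N → Ω → X} {φ : X → ℝ}

lemma stepB17 (hζhat : ∀ i, Measurable (ζhat i)) (hζ : ∀ i, Measurable (ζ i))
    (hyp : ∀ h : Fin N → X → ℝ, (∀ i, Measurable (h i)) → (∀ i, ∃ C, ∀ x, |h i x| ≤ C) →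
      μ[(fun ω => ∏ i, h i (ζ i ω)) |
          MeasurableSpace.comap (fun ω (i : Fin N) => ζhat i ω) MeasurableSpace.pi]
        =ᵐ[μ] fun ω => ∏ i, ∫ y, h i y ∂(f (ζhat i ω)))
    (hφ : Measurable φ) (hφb : ∀ x, |φ x| ≤ 1) (m : Fin N → ℕ) :
    ∫ ω, ∏ i, (φ (ζ i ω) - kI f φ (ζhat i ω)) ^ (m i) ∂μ
      = ∫ ω, ∏ i, kG f φ (m i) (ζhat i ω) ∂μ := by
  classical
  set Jset := Fintype.piFinset (fun i : Fin N => Finset.range (m i + 1)) with hJ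
  -- weights
  set w : (Fin N → ℕ) → Fin N → X → ℝ := fun g i x =>
    (-1 : ℝ) ^ (g i + m i) * kI f φ x ^ (m i - g i) * ((m i).choose (g i) : ℝ) with hw_def
  have hw_meas : ∀ g i, Measurable (w g i) := fun g i =>
    ((((kI_meas hφ).pow_const _).const_mul _).mul_const _)
  have hw_bdd : ∀ g i x, |w g i x| ≤ ((m i).choose (g i) : ℝ) := by
    intro g i x
    rw [hw_def]
    simp only [abs_mul, abs_pow, abs_neg, abs_one, one_pow, one_mul]
    rw [abs_of_nonneg (by positivity : (0:ℝ) ≤ ((m i).choose (g i) : ℝ))]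
    refine mul_le_of_le_one_left (by positivity) ?_
    exact pow_le_one₀ (abs_nonneg _) (kI_abs_le hφb x)
  have hh_meas : ∀ (g : Fin N → ℕ) (i : Fin N), Measurable (fun x => φ x ^ g i) := fun g i =>
    hφ.pow_const _
  have hh_bdd : ∀ (g : Fin N → ℕ) (i : Fin N) (x : X), |φ x ^ g i| ≤ 1 := by
    intro g i x
    rw [abs_pow]
    exact pow_le_one₀ (abs_nonneg _) (hφb x)
  have hpoint : ∀ ω, ∏ i, (φ (ζ i ω) - kI f φ (ζhat i ω)) ^ (m i)
      = ∑ g ∈ Jset, ∏ i, (φ (ζ i ω) ^ g i * w g i (ζhat i ω)) := by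
    intro ω
    simp only [hw_def, hJ]
    calc ∏ i, (φ (ζ i ω) - kI f φ (ζhat i ω)) ^ (m i)
        = ∏ i, ∑ j ∈ Finset.range (m i + 1), φ (ζ i ω) ^ j *
            ((-1 : ℝ) ^ (j + m i) * kI f φ (ζhat i ω) ^ (m i - j) * ((m i).choose j : ℝ)) :=
          Finset.prod_congr rfl fun i _ => by
            rw [sub_pow]; exact Finset.sum_congr rfl fun j _ => by ring
      _ = _ := Finset.prod_univ_sum _ _
  have hint1 : ∀ g ∈ Jset, Integrable (fun ω => ∏ i, (φ (ζ i ω) ^ g i * w g i (ζhat i ω))) μ := by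
    intro g _
    refine integrable_prod_bdd17
      (fun i => ((hφ.comp (hζ i)).pow_const _).mul ((hw_meas g i).comp (hζhat i)))
      fun i => ⟨((m i).choose (g i) : ℝ), fun ω => ?_⟩
    rw [abs_mul]
    calc |φ (ζ i ω) ^ g i| * |w g i (ζhat i ω)| ≤ 1 * ((m i).choose (g i) : ℝ) :=
      mul_le_mul (hh_bdd g i _) (hw_bdd g i _) (abs_nonneg _) zero_le_one
    _ = _ := one_mul _
  have hint2 : ∀ g ∈ Jset, Integrable
      (fun ω => ∏ i, ((∫ y, φ y ^ g i ∂(f (ζhat i ω))) * w g i (ζhat i ω))) μ := by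
    intro g _
    have hmeasI : ∀ i : Fin N, Measurable fun x => ∫ y, φ y ^ g i ∂(f x) := fun i =>
      (StronglyMeasurable.integral_kernel_prod_right'
        (f := fun p : X × X => φ p.2 ^ g i)
        ((hφ.comp measurable_snd).pow_const _).stronglyMeasurable).measurable
    refine integrable_prod_bdd17
      (fun i => ((hmeasI i).comp (hζhat i)).mul ((hw_meas g i).comp (hζhat i)))
      fun i => ⟨((m i).choose (g i) : ℝ), fun ω => ?_⟩
    rw [abs_mul]
    have hIb : |∫ y, φ y ^ g i ∂(f (ζhat i ω))| ≤ 1 := by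
      have := norm_integral_le_of_norm_le_const (μ := f (ζhat i ω))
        (f := fun y => φ y ^ g i) (C := 1)
        (Filter.Eventually.of_forall fun y => by
          simpa [Real.norm_eq_abs] using hh_bdd g i y)
      simpa [Real.norm_eq_abs, measure_univ] using this
    calc |∫ y, φ y ^ g i ∂(f (ζhat i ω))| * |w g i (ζhat i ω)|
        ≤ 1 * ((m i).choose (g i) : ℝ) :=
          mul_le_mul hIb (hw_bdd g i _) (abs_nonneg _) zero_le_one
      _ = _ := one_mul _
  calc ∫ ω, ∏ i, (φ (ζ i ω) - kI f φ (ζhat i ω)) ^ (m i) ∂μ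
      = ∫ ω, ∑ g ∈ Jset, ∏ i, (φ (ζ i ω) ^ g i * w g i (ζhat i ω)) ∂μ :=
        integral_congr_ae (Filter.Eventually.of_forall fun ω => hpoint ω)
    _ = ∑ g ∈ Jset, ∫ ω, ∏ i, (φ (ζ i ω) ^ g i * w g i (ζhat i ω)) ∂μ :=
        integral_finset_sum _ hint1
    _ = ∑ g ∈ Jset, ∫ ω, ∏ i, ((∫ y, φ y ^ g i ∂(f (ζhat i ω))) * w g i (ζhat i ω)) ∂μ := by
        refine Finset.sum_congr rfl fun g _ => ?_
        exact stepA17 hζhat hζ hyp (fun i x => φ x ^ g i) (w g) (hh_meas g)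
          (fun i => ⟨1, hh_bdd g i⟩) (hw_meas g)
          (fun i => ⟨((m i).choose (g i) : ℝ), hw_bdd g i⟩)
    _ = ∫ ω, ∑ g ∈ Jset, ∏ i, ((∫ y, φ y ^ g i ∂(f (ζhat i ω))) * w g i (ζhat i ω)) ∂μ :=
        (integral_finset_sum _ hint2).symm
    _ = ∫ ω, ∏ i, kG f φ (m i) (ζhat i ω) ∂μ := by
        refine integral_congr_ae (Filter.Eventually.of_forall fun ω => ?_)
        have : ∏ i, kG f φ (m i) (ζhat i ω)
            = ∑ g ∈ Jset, ∏ i, ((∫ y, φ y ^ g i ∂(f (ζhat i ω))) *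
              ((-1 : ℝ) ^ (g i + m i) * kI f φ (ζhat i ω) ^ (m i - g i) *
                ((m i).choose (g i) : ℝ))) := by
          simp only [hJ]
          calc ∏ i, kG f φ (m i) (ζhat i ω)
              = ∏ i, ∑ j ∈ Finset.range (m i + 1), (∫ y, φ y ^ j ∂(f (ζhat i ω))) *
                  ((-1 : ℝ) ^ (j + m i) * kI f φ (ζhat i ω) ^ (m i - j) *
                    ((m i).choose j : ℝ)) :=
                Finset.prod_congr rfl fun i _ => kG_expand hφ hφb (m i) _
            _ = _ := Finset.prod_univ_sum _ _
        simp only [hw_def]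
        rw [this]

end stepB

section counting

open Finset in
lemma count_good17 (k N : ℕ) (hk : 0 < k) :
    (Finset.univ.filter (fun g : Fin (2 * k) → Fin N =>
        ∀ i, ({j | g j = i} : Finset (Fin (2 * k))).card ≠ 1)).card
      ≤ N ^ k * k ^ (2 * k) := by
  classical
  rcases le_or_gt k N with hkN | hNk
  · -- k ≤ N : inject into pairs (set of size k, function into it)
    have hsub : (Finset.univ.filter (fun g : Fin (2 * k) → Fin N =>
        ∀ i, ({j | g j = i} : Finset (Fin (2 * k))).card ≠ 1))
        ⊆ (Finset.powersetCard k (Finset.univ : Finset (Fin N))).biUnion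
            (fun s => Fintype.piFinset fun _ : Fin (2 * k) => s) := by
      intro g hg
      rw [Finset.mem_filter] at hg
      obtain ⟨-, hgood⟩ := hg
      have himg : (Finset.univ.image g).card ≤ k := by
        have hcard : 2 * k = ∑ i ∈ Finset.univ.image g,
            ({j | g j = i} : Finset (Fin (2 * k))).card := by
          have := Finset.card_eq_sum_card_fiberwise
            (f := g) (s := (Finset.univ : Finset (Fin (2 * k))))
            (t := Finset.univ.image g) (fun j _ => Finset.mem_image_of_mem g (Finset.mem_univ j))
          simpa using this
        have hlb : ∀ i ∈ Finset.univ.image g,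
            2 ≤ ({j | g j = i} : Finset (Fin (2 * k))).card := by
          intro i hi
          obtain ⟨j, -, hj⟩ := Finset.mem_image.1 hi
          have hpos : 0 < ({j | g j = i} : Finset (Fin (2 * k))).card :=
            Finset.card_pos.2 ⟨j, by simp [hj]⟩
          have := hgood i
          omega
        have hsum : 2 * (Finset.univ.image g).card
            ≤ ∑ i ∈ Finset.univ.image g, ({j | g j = i} : Finset (Fin (2 * k))).card := by
          calc 2 * (Finset.univ.image g).card
              = ∑ _i ∈ Finset.univ.image g, 2 := by
                rw [Finset.sum_const, smul_eq_mul, mul_comm]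
            _ ≤ _ := Finset.sum_le_sum hlb
        omega
      obtain ⟨s, hs1, -, hs3⟩ := Finset.exists_subsuperset_card_eq
        (Finset.subset_univ (Finset.univ.image g)) himg (by simpa using hkN)
      refine Finset.mem_biUnion.2 ⟨s, ?_, ?_⟩
      · exact Finset.mem_powersetCard.2 ⟨Finset.subset_univ s, hs3⟩
      · exact Fintype.mem_piFinset.2 fun j => hs1 (Finset.mem_image_of_mem g (Finset.mem_univ j))
    calc (Finset.univ.filter _).card
        ≤ _ := Finset.card_le_card hsub
      _ ≤ ∑ s ∈ Finset.powersetCard k (Finset.univ : Finset (Fin N)),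
            (Fintype.piFinset fun _ : Fin (2 * k) => s).card := Finset.card_biUnion_le
      _ ≤ ∑ s ∈ Finset.powersetCard k (Finset.univ : Finset (Fin N)), k ^ (2 * k) := by
          refine Finset.sum_le_sum fun s hs => ?_
          have hcard : s.card = k := (Finset.mem_powersetCard.1 hs).2
          rw [Fintype.card_piFinset]
          simp [hcard]
      _ = (Finset.powersetCard k (Finset.univ : Finset (Fin N))).card * k ^ (2 * k) := by
          rw [Finset.sum_const, smul_eq_mul]
      _ ≤ N ^ k * k ^ (2 * k) := by
          rw [Finset.card_powersetCard]
          gcongr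
          simpa using Nat.choose_le_pow N k
  · -- N < k : crude bound
    calc (Finset.univ.filter _).card
        ≤ (Finset.univ : Finset (Fin (2 * k) → Fin N)).card := Finset.card_le_card
          (Finset.filter_subset _ _)
      _ = N ^ (2 * k) := by simp [Fintype.card_fun]
      _ = N ^ k * N ^ k := by rw [← pow_add]; ring_nf
      _ ≤ N ^ k * k ^ (2 * k) := by
          have h1 : N ^ k ≤ k ^ k := Nat.pow_le_pow_left hNk.le k
          have h2 : k ^ k ≤ k ^ (2 * k) := Nat.pow_le_pow_right hk (by omega)
          exact Nat.mul_le_mul_left _ (h1.trans h2)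

end counting

section stepC

variable {Ω X : Type} {m0 : MeasurableSpace Ω} {mX : MeasurableSpace X}
  {μ : Measure Ω} [IsProbabilityMeasure μ]
  {N : ℕ} {f : Kernel X X} [IsMarkovKernel f] {ζhat ζ : Fin N → Ω → X} {φ : X → ℝ}

lemma stepC17 (hζhat : ∀ i, Measurable (ζhat i)) (hζ : ∀ i, Measurable (ζ i))
    (hyp : ∀ h : Fin N → X → ℝ, (∀ i, Measurable (h i)) → (∀ i, ∃ C, ∀ x, |h i x| ≤ C) →
      μ[(fun ω => ∏ i, h i (ζ i ω)) |
          MeasurableSpace.comap (fun ω (i : Fin N) => ζhat i ω) MeasurableSpace.pi]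
        =ᵐ[μ] fun ω => ∏ i, ∫ y, h i y ∂(f (ζhat i ω)))
    (hφ : Measurable φ) (hφb : ∀ x, |φ x| ≤ 1) (k : ℕ) (hk : 0 < k) :
    ∫ ω, (∑ i, (φ (ζ i ω) - kI f φ (ζhat i ω))) ^ (2 * k) ∂μ
      ≤ (N : ℝ) ^ k * (k : ℝ) ^ (2 * k) * 4 ^ k := by
  set D : Fin N → Ω → ℝ := fun i ω => φ (ζ i ω) - kI f φ (ζhat i ω) with hD_def
  have hD_meas : ∀ i, Measurable (D i) := fun i =>
    (hφ.comp (hζ i)).sub ((kI_meas hφ).comp (hζhat i))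
  have hD_bdd : ∀ i ω, |D i ω| ≤ 2 := by
    intro i ω
    calc |D i ω| ≤ |φ (ζ i ω)| + |kI f φ (ζhat i ω)| := abs_sub _ _
      _ ≤ 1 + 1 := add_le_add (hφb _) (kI_abs_le hφb _)
      _ = 2 := by norm_num
  -- counts
  set cnt : (Fin (2 * k) → Fin N) → Fin N → ℕ := fun g i =>
    ({j | g j = i} : Finset (Fin (2 * k))).card with hcnt_def
  have hcnt_sum : ∀ g : Fin (2 * k) → Fin N, ∑ i, cnt g i = 2 * k := by
    intro g
    have := Finset.card_eq_sum_card_fiberwise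
      (f := g) (s := (Finset.univ : Finset (Fin (2 * k))))
      (t := (Finset.univ : Finset (Fin N))) (fun j _ => Finset.mem_univ (g j))
    simpa [hcnt_def] using this.symm
  -- pointwise expansion
  have hexp : ∀ ω, (∑ i, D i ω) ^ (2 * k)
      = ∑ g : Fin (2 * k) → Fin N, ∏ i, (D i ω) ^ (cnt g i) := by
    intro ω
    rw [Finset.sum_pow' Finset.univ (fun i => D i ω) (2 * k), Fintype.piFinset_univ]
    refine Finset.sum_congr rfl fun g _ => ?_
    calc ∏ j, D (g j) ω = ∏ i, ∏ j ∈ ({j | g j = i} : Finset (Fin (2 * k))), D i ω :=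
        (Finset.prod_fiberwise' Finset.univ g (fun i => D i ω)).symm
      _ = ∏ i, (D i ω) ^ (cnt g i) := by
        refine Finset.prod_congr rfl fun i _ => ?_
        rw [Finset.prod_const, hcnt_def]
  have hint : ∀ g : Fin (2 * k) → Fin N,
      Integrable (fun ω => ∏ i, (D i ω) ^ (cnt g i)) μ := by
    intro g
    refine integrable_prod_bdd17 (fun i => (hD_meas i).pow_const _)
      fun i => ⟨2 ^ (cnt g i), fun ω => ?_⟩
    rw [abs_pow]
    exact pow_le_pow_left₀ (abs_nonneg _) (hD_bdd i ω) _
  -- the integrals after conditioning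
  have hIg : ∀ g : Fin (2 * k) → Fin N,
      ∫ ω, ∏ i, (D i ω) ^ (cnt g i) ∂μ = ∫ ω, ∏ i, kG f φ (cnt g i) (ζhat i ω) ∂μ := fun g =>
    stepB17 hζhat hζ hyp hφ hφb (cnt g)
  have hIbound : ∀ g : Fin (2 * k) → Fin N,
      |∫ ω, ∏ i, kG f φ (cnt g i) (ζhat i ω) ∂μ| ≤ 4 ^ k := by
    intro g
    have hb : ∀ ω, ‖∏ i, kG f φ (cnt g i) (ζhat i ω)‖ ≤ 4 ^ k := by
      intro ω
      rw [Real.norm_eq_abs]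
      calc |∏ i, kG f φ (cnt g i) (ζhat i ω)| ≤ ∏ i, (2 : ℝ) ^ (cnt g i) :=
          abs_prod_le17 _ _ fun i => kG_abs_le hφb _ _
        _ = 2 ^ (∑ i, cnt g i) := Finset.prod_pow_eq_pow_sum _ _ _
        _ = 4 ^ k := by rw [hcnt_sum g, pow_mul]; norm_num
    have := norm_integral_le_of_norm_le_const (μ := μ)
      (f := fun ω => ∏ i, kG f φ (cnt g i) (ζhat i ω)) (C := 4 ^ k)
      (Filter.Eventually.of_forall hb)
    simpa [Real.norm_eq_abs, measure_univ] using this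
  have hIzero : ∀ g : Fin (2 * k) → Fin N, (¬ ∀ i, cnt g i ≠ 1) →
      ∫ ω, ∏ i, kG f φ (cnt g i) (ζhat i ω) ∂μ = 0 := by
    intro g hg
    push_neg at hg
    obtain ⟨i0, hi0⟩ := hg
    have : ∀ ω, ∏ i, kG f φ (cnt g i) (ζhat i ω) = 0 := by
      intro ω
      refine Finset.prod_eq_zero (Finset.mem_univ i0) ?_
      rw [hi0]
      exact kG_one hφ hφb _
    simp only [this, integral_zero]
  calc ∫ ω, (∑ i, D i ω) ^ (2 * k) ∂μ
      = ∫ ω, ∑ g : Fin (2 * k) → Fin N, ∏ i, (D i ω) ^ (cnt g i) ∂μ :=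
        integral_congr_ae (Filter.Eventually.of_forall fun ω => hexp ω)
    _ = ∑ g : Fin (2 * k) → Fin N, ∫ ω, ∏ i, (D i ω) ^ (cnt g i) ∂μ :=
        integral_finset_sum _ fun g _ => hint g
    _ = ∑ g : Fin (2 * k) → Fin N, ∫ ω, ∏ i, kG f φ (cnt g i) (ζhat i ω) ∂μ :=
        Finset.sum_congr rfl fun g _ => hIg g
    _ ≤ ∑ g : Fin (2 * k) → Fin N, |∫ ω, ∏ i, kG f φ (cnt g i) (ζhat i ω) ∂μ| :=
        Finset.sum_le_sum fun g _ => le_abs_self _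
    _ = ∑ g ∈ Finset.univ.filter (fun g : Fin (2 * k) → Fin N => ∀ i, cnt g i ≠ 1),
          |∫ ω, ∏ i, kG f φ (cnt g i) (ζhat i ω) ∂μ|
        + ∑ g ∈ Finset.univ.filter (fun g : Fin (2 * k) → Fin N => ¬ ∀ i, cnt g i ≠ 1),
          |∫ ω, ∏ i, kG f φ (cnt g i) (ζhat i ω) ∂μ| :=
        (Finset.sum_filter_add_sum_filter_not _ _ _).symm
    _ ≤ (Finset.univ.filter (fun g : Fin (2 * k) → Fin N => ∀ i, cnt g i ≠ 1)).card
          • (4 : ℝ) ^ k + 0 := by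
        refine add_le_add ?_ ?_
        · exact Finset.sum_le_card_nsmul _ _ _ fun g _ => hIbound g
        · refine le_of_eq (Finset.sum_eq_zero fun g hg => ?_)
          rw [Finset.mem_filter] at hg
          rw [hIzero g hg.2, abs_zero]
    _ ≤ (N : ℝ) ^ k * (k : ℝ) ^ (2 * k) * 4 ^ k := by
        rw [add_zero, nsmul_eq_mul]
        have hcount : ((Finset.univ.filter (fun g : Fin (2 * k) → Fin N =>
            ∀ i, cnt g i ≠ 1)).card : ℝ) ≤ (N : ℝ) ^ k * (k : ℝ) ^ (2 * k) := by
          have := count_good17 k N hk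
          calc ((Finset.univ.filter (fun g : Fin (2 * k) → Fin N =>
              ∀ i, cnt g i ≠ 1)).card : ℝ)
              ≤ ((N ^ k * k ^ (2 * k) : ℕ) : ℝ) := by exact_mod_cast this
            _ = _ := by push_cast; ring
        have h4 : (0 : ℝ) ≤ 4 ^ k := by positivity
        calc ((Finset.univ.filter _).card : ℝ) * (4 : ℝ) ^ k
            ≤ ((N : ℝ) ^ k * (k : ℝ) ^ (2 * k)) * 4 ^ k := by
              exact mul_le_mul_of_nonneg_right hcount h4
          _ = _ := by ring

end stepC

/-- conditional unbiasedness / `L^r` bound for the mutation step.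
Conditionally on `ζ̂`, the particles `ζ^i` are independent with `ζ^i ~ f(ζ̂^i,·)`
(encoded through the conditional expectation of products of bounded measurable
functions given `σ(ζ̂)`). Then for bounded `‖φ‖ ≤ 1`,
`E[|N⁻¹Σφ(ζ^i) − N⁻¹Σ f(φ)(ζ̂^i)|^r]^{1/r} ≤ 2B_r/√N`,
with `B_r` depending only on `r`. -/
theorem stmt17 (r : ℝ) (hr : 1 ≤ r) :
    ∃ B : ℝ, ∀ (N : ℕ), 0 < N →
      ∀ (Ω : Type) (m0 : MeasurableSpace Ω) (μ : Measure Ω), IsProbabilityMeasure μ →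
      ∀ (X : Type) (mX : MeasurableSpace X) (f : Kernel X X), IsMarkovKernel f →
      ∀ (ζhat ζ : Fin N → Ω → X),
      (∀ i, Measurable (ζhat i)) → (∀ i, Measurable (ζ i)) →
      (∀ h : Fin N → X → ℝ, (∀ i, Measurable (h i)) → (∀ i, ∃ C, ∀ x, |h i x| ≤ C) →
        μ[(fun ω => ∏ i, h i (ζ i ω)) |
            MeasurableSpace.comap (fun ω (i : Fin N) => ζhat i ω) MeasurableSpace.pi]
          =ᵐ[μ] fun ω => ∏ i, ∫ y, h i y ∂(f (ζhat i ω))) →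
      ∀ φ : X → ℝ, Measurable φ → (∀ x, |φ x| ≤ 1) →
      (∫ ω, |(1 / (N : ℝ)) * ∑ i, φ (ζ i ω)
          - (1 / (N : ℝ)) * ∑ i, ∫ y, φ y ∂(f (ζhat i ω))| ^ r ∂μ) ^ (1 / r)
        ≤ 2 * B / Real.sqrt N := by
  have hr0 : (0 : ℝ) < r := lt_of_lt_of_le zero_lt_one hr
  set k : ℕ := ⌈r⌉₊ with hk_def
  have hk : 0 < k := Nat.ceil_pos.2 hr0
  have hrk : r ≤ (k : ℝ) := Nat.le_ceil r
  set B : ℝ := (k : ℝ) ^ (2 * k) * 4 ^ k with hB_def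
  have hB1 : (1 : ℝ) ≤ B := by
    have h1 : (1 : ℝ) ≤ (k : ℝ) ^ (2 * k) := one_le_pow₀ (by exact_mod_cast hk)
    have h2 : (1 : ℝ) ≤ 4 ^ k := one_le_pow₀ (by norm_num)
    calc (1 : ℝ) = 1 * 1 := by ring
      _ ≤ _ := mul_le_mul h1 h2 zero_le_one (le_trans zero_le_one h1)
  refine ⟨B, ?_⟩
  intro N hN Ω m0 μ hμ X mX f hf ζhat ζ hζhat hζ hyp φ hφ hφb
  have hNR : (0 : ℝ) < (N : ℝ) := by exact_mod_cast hN
  set T : Ω → ℝ := fun ω => ∑ i, (φ (ζ i ω) - kI f φ (ζhat i ω)) with hT_def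
  set S : Ω → ℝ := fun ω => (1 / (N : ℝ)) * ∑ i, φ (ζ i ω)
      - (1 / (N : ℝ)) * ∑ i, kI f φ (ζhat i ω) with hS_def
  have hS_eq : ∀ ω, S ω = (1 / (N : ℝ)) * T ω := by
    intro ω
    rw [hS_def, hT_def]
    simp only [Finset.sum_sub_distrib]
    ring
  have hT_meas : Measurable T :=
    Finset.measurable_sum _ fun i _ => (hφ.comp (hζ i)).sub ((kI_meas hφ).comp (hζhat i))
  have hS_meas : Measurable S :=
    ((Finset.measurable_sum _ fun i _ => hφ.comp (hζ i)).const_mul _).sub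
      ((Finset.measurable_sum _ fun i _ => (kI_meas hφ).comp (hζhat i)).const_mul _)
  have hT_bdd : ∀ ω, |T ω| ≤ 2 * N := by
    intro ω
    calc |T ω| ≤ ∑ i, |φ (ζ i ω) - kI f φ (ζhat i ω)| := Finset.abs_sum_le_sum_abs _ _
      _ ≤ ∑ _i : Fin N, (2 : ℝ) := Finset.sum_le_sum fun i _ => by
          calc |φ (ζ i ω) - kI f φ (ζhat i ω)| ≤ |φ (ζ i ω)| + |kI f φ (ζhat i ω)| := abs_sub _ _
            _ ≤ 1 + 1 := add_le_add (hφb _) (kI_abs_le hφb _)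
            _ = 2 := by norm_num
      _ = 2 * N := by rw [Finset.sum_const]; simp [mul_comm]
  have hS_bdd : ∀ ω, |S ω| ≤ 2 := by
    intro ω
    rw [hS_eq ω, abs_mul]
    rw [abs_of_nonneg (by positivity : (0:ℝ) ≤ 1 / (N:ℝ))]
    calc 1 / (N : ℝ) * |T ω| ≤ 1 / (N : ℝ) * (2 * N) := by
          exact mul_le_mul_of_nonneg_left (hT_bdd ω) (by positivity)
      _ = 2 := by field_simp
  -- moment bound from stepC
  have hmom : ∫ ω, (S ω) ^ (2 * k) ∂μ ≤ B / (N : ℝ) ^ k := by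
    have h1 : ∫ ω, (S ω) ^ (2 * k) ∂μ
        = (1 / (N : ℝ)) ^ (2 * k) * ∫ ω, (T ω) ^ (2 * k) ∂μ := by
      rw [← integral_const_mul]
      refine integral_congr_ae (Filter.Eventually.of_forall fun ω => ?_)
      beta_reduce
      rw [hS_eq ω, mul_pow]
    have h2 : ∫ ω, (T ω) ^ (2 * k) ∂μ ≤ (N : ℝ) ^ k * (k : ℝ) ^ (2 * k) * 4 ^ k :=
      stepC17 hζhat hζ hyp hφ hφb k hk
    rw [h1]
    calc (1 / (N : ℝ)) ^ (2 * k) * ∫ ω, (T ω) ^ (2 * k) ∂μ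
        ≤ (1 / (N : ℝ)) ^ (2 * k) * ((N : ℝ) ^ k * (k : ℝ) ^ (2 * k) * 4 ^ k) :=
          mul_le_mul_of_nonneg_left h2 (by positivity)
      _ = B / (N : ℝ) ^ k := by
          rw [hB_def]
          field_simp
          rw [← pow_mul, one_div, inv_pow, mul_comm k 2]; exact inv_mul_cancel₀ (by positivity)
  -- Lp monotonicity
  set p : ℝ≥0∞ := ENNReal.ofReal r with hp_def
  set q : ℝ≥0∞ := ENNReal.ofReal ((2 * k : ℕ) : ℝ) with hq_def
  have hp0 : p ≠ 0 := by
    rw [hp_def]; simp [ENNReal.ofReal_eq_zero, not_le, hr0]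
  have hq0 : q ≠ 0 := by
    rw [hq_def]
    simp only [ne_eq, ENNReal.ofReal_eq_zero, not_le]
    positivity
  have hpq : p ≤ q := by
    rw [hp_def, hq_def]
    refine ENNReal.ofReal_le_ofReal ?_
    push_cast
    nlinarith [hrk, hr0]
  have hptoReal : p.toReal = r := ENNReal.toReal_ofReal hr0.le
  have hqtoReal : q.toReal = ((2 * k : ℕ) : ℝ) := ENNReal.toReal_ofReal (by positivity)
  have hmem_p : MemLp S p μ :=
    MemLp.of_bound hS_meas.aestronglyMeasurable 2
      (Filter.Eventually.of_forall fun ω => by simpa [Real.norm_eq_abs] using hS_bdd ω)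
  have hmem_q : MemLp S q μ :=
    MemLp.of_bound hS_meas.aestronglyMeasurable 2
      (Filter.Eventually.of_forall fun ω => by simpa [Real.norm_eq_abs] using hS_bdd ω)
  have hmono : eLpNorm S p μ ≤ eLpNorm S q μ :=
    eLpNorm_le_eLpNorm_of_exponent_le hpq hS_meas.aestronglyMeasurable
  rw [hmem_p.eLpNorm_eq_integral_rpow_norm hp0 (by rw [hp_def]; exact ENNReal.ofReal_ne_top),
    hmem_q.eLpNorm_eq_integral_rpow_norm hq0 (by rw [hq_def]; exact ENNReal.ofReal_ne_top)]
    at hmono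
  have hq_int_nonneg : (0:ℝ) ≤ ∫ ω, ‖S ω‖ ^ q.toReal ∂μ :=
    integral_nonneg fun ω => Real.rpow_nonneg (norm_nonneg _) _
  have hkey : (∫ ω, ‖S ω‖ ^ p.toReal ∂μ) ^ p.toReal⁻¹
      ≤ (∫ ω, ‖S ω‖ ^ q.toReal ∂μ) ^ q.toReal⁻¹ := by
    rw [← ENNReal.ofReal_le_ofReal_iff (by positivity)]
    exact hmono
  -- identify the q-integral with the natural-power integral
  have hq_int_eq : ∫ ω, ‖S ω‖ ^ q.toReal ∂μ = ∫ ω, (S ω) ^ (2 * k) ∂μ := by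
    refine integral_congr_ae (Filter.Eventually.of_forall fun ω => ?_)
    beta_reduce
    rw [hqtoReal, Real.rpow_natCast, Real.norm_eq_abs, ← abs_pow,
      abs_of_nonneg (Even.pow_nonneg (even_two_mul k) _)]
  -- final computation
  have hsqrtN : (0 : ℝ) < Real.sqrt N := Real.sqrt_pos.2 hNR
  have hNk_rpow : ((N : ℝ) ^ k) ^ q.toReal⁻¹ = Real.sqrt N := by
    rw [hqtoReal, ← Real.rpow_natCast (N : ℝ) k, ← Real.rpow_mul hNR.le,
      Real.sqrt_eq_rpow]
    congr 1
    have hkne : (k : ℝ) ≠ 0 := by positivity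
    push_cast
    field_simp
  have hfinal : (∫ ω, ‖S ω‖ ^ q.toReal ∂μ) ^ q.toReal⁻¹ ≤ B / Real.sqrt N := by
    calc (∫ ω, ‖S ω‖ ^ q.toReal ∂μ) ^ q.toReal⁻¹
        ≤ (B / (N : ℝ) ^ k) ^ q.toReal⁻¹ := by
          refine Real.rpow_le_rpow hq_int_nonneg ?_ (by positivity)
          rw [hq_int_eq]; exact hmom
      _ = B ^ q.toReal⁻¹ / ((N : ℝ) ^ k) ^ q.toReal⁻¹ :=
          Real.div_rpow (le_trans zero_le_one hB1) (by positivity) _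
      _ = B ^ q.toReal⁻¹ / Real.sqrt N := by rw [hNk_rpow]
      _ ≤ B / Real.sqrt N := by
          have hBpow : B ^ q.toReal⁻¹ ≤ B := by
            have hexp : q.toReal⁻¹ ≤ (1 : ℝ) := by
              rw [hqtoReal]
              have h2k : (1 : ℝ) ≤ ((2 * k : ℕ) : ℝ) := by
                push_cast
                nlinarith [(Nat.one_le_cast (α := ℝ)).2 hk]
              calc (((2 * k : ℕ) : ℝ))⁻¹ ≤ 1⁻¹ := by
                    exact inv_anti₀ zero_lt_one h2k
                _ = 1 := inv_one
            calc B ^ q.toReal⁻¹ ≤ B ^ (1 : ℝ) :=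
                Real.rpow_le_rpow_of_exponent_le hB1 hexp
              _ = B := Real.rpow_one B
          exact (div_le_div_iff_of_pos_right hsqrtN).2 hBpow
  have hint_eq : ∫ ω, |(1 / (N : ℝ)) * ∑ i, φ (ζ i ω)
      - (1 / (N : ℝ)) * ∑ i, ∫ y, φ y ∂(f (ζhat i ω))| ^ r ∂μ
      = ∫ ω, ‖S ω‖ ^ p.toReal ∂μ := by
    rw [hptoReal]
    refine integral_congr_ae (Filter.Eventually.of_forall fun ω => ?_)
    beta_reduce
    rw [Real.norm_eq_abs]
    rfl
  rw [hint_eq, show (1 : ℝ) / r = p.toReal⁻¹ by rw [hptoReal, one_div]]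
  calc (∫ ω, ‖S ω‖ ^ p.toReal ∂μ) ^ p.toReal⁻¹
      ≤ (∫ ω, ‖S ω‖ ^ q.toReal ∂μ) ^ q.toReal⁻¹ := hkey
    _ ≤ B / Real.sqrt N := hfinal
    _ ≤ 2 * B / Real.sqrt N := by
        have : B ≤ 2 * B := by nlinarith [hB1]
        exact (div_le_div_iff_of_pos_right hsqrtN).2 this
end
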